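/- Let f : [0,1]^d → ℝ be integrable, γ ∈ ℝ, and let S* = {x ∈ [0,1]^d : f(x) > γ}. Then for any measurable set S ⊆ [0,1]^d, R(S) − R(S*) = 2 ∫_{Δ(S,S*)} |γ − f(x)| dx, where Δ(S,S*) is the symmetric difference of S and S*. -/

import Mathlib

open MeasureTheory

/-- Let `f : [0,1]^d → ℝ` be integrable, `γ ∈ ℝ`, and let
`S* = {x ∈ [0,1]^d : f(x) > γ}`. Then for any measurable set `S ⊆ [0,1]^d`,
`R(S) − R(S*) = 2 ∫_{Δ(S,S*)} |γ − f(x)| dx`, where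
`R(S) = ∫_{[0,1]^d} (γ − f(x)) (𝟙{x ∈ S} − 𝟙{x ∉ S}) dx` and `Δ(S,S*)` is the
symmetric difference of `S` and `S*`. -/
theorem statement7 (d : ℕ) (f : (Fin d → ℝ) → ℝ) (γ : ℝ)
    (hf : IntegrableOn f (Set.Icc (0 : Fin d → ℝ) 1) volume)
    (S : Set (Fin d → ℝ)) (hS : MeasurableSet S)
    (hSsub : S ⊆ Set.Icc (0 : Fin d → ℝ) 1) :
    let cube : Set (Fin d → ℝ) := Set.Icc 0 1
    let Sstar : Set (Fin d → ℝ) := {x ∈ cube | γ < f x}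
    let R : Set (Fin d → ℝ) → ℝ := fun T => ∫ x in cube,
      (γ - f x) * (Set.indicator T (fun _ => (1 : ℝ)) x - Set.indicator Tᶜ (fun _ => (1 : ℝ)) x)
    R S - R Sstar = 2 * ∫ x in symmDiff S Sstar, |γ - f x| := by
  intro cube Sstar R
  have hcube : MeasurableSet cube := measurableSet_Icc
  obtain ⟨g, hg_sm, hfg⟩ := hf.aestronglyMeasurable
  have hg_meas : Measurable g := hg_sm.measurable
  set T : Set (Fin d → ℝ) := cube ∩ {x | γ < g x} with hT_def
  have hT : MeasurableSet T := hcube.inter (measurableSet_lt measurable_const hg_meas)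
  have hTsub : T ⊆ cube := Set.inter_subset_left
  have hae : ∀ᵐ x ∂(volume.restrict cube), x ∈ cube ∧ f x = g x :=
    (ae_restrict_mem hcube).and hfg
  have hnull : volume ({x | f x ≠ g x} ∩ cube) = 0 := by
    have h := hfg
    rw [Filter.EventuallyEq, ae_iff, Measure.restrict_apply' hcube] at h
    simpa using h
  have hST : Sstar =ᵐ[volume] T := by
    rw [← measure_symmDiff_eq_zero_iff]
    refine measure_mono_null ?_ hnull
    intro x hx
    rcases hx with hx | hx
    · refine ⟨fun h => hx.2 ⟨hx.1.1, ?_⟩, hx.1.1⟩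
      show γ < g x
      rw [← h]; exact hx.1.2
    · refine ⟨fun h => hx.2 ⟨hx.1.1, ?_⟩, hx.1.1⟩
      show γ < f x
      rw [h]; exact hx.1.2
  -- replace Sstar by T in R
  have hRstar : R Sstar = ∫ x in cube,
      (γ - f x) * (Set.indicator T (fun _ => (1 : ℝ)) x - Set.indicator Tᶜ (fun _ => (1 : ℝ)) x) := by
    refine integral_congr_ae ?_
    filter_upwards [hae] with x hx
    obtain ⟨hxc, hxfg⟩ := hx
    have hmem : x ∈ Sstar ↔ x ∈ T := by
      simp only [Sstar, hT_def, Set.mem_setOf_eq, Set.mem_inter_iff, hxfg]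
    by_cases h : x ∈ T
    · simp [Set.indicator_of_mem (hmem.mpr h), Set.indicator_of_mem h,
        Set.indicator_of_notMem (show x ∉ Sstarᶜ from fun hh => hh (hmem.mpr h)),
        Set.indicator_of_notMem (show x ∉ Tᶜ from fun hh => hh h)]
    · simp [Set.indicator_of_notMem (show x ∉ Sstar from fun hh => h (hmem.mp hh)),
        Set.indicator_of_notMem h,
        Set.indicator_of_mem (show x ∈ Sstarᶜ from fun hh => h (hmem.mp hh)),
        Set.indicator_of_mem (show x ∈ Tᶜ from h)]
  -- replace Sstar by T in the symmetric-difference integral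
  have hΔae : symmDiff S Sstar =ᵐ[volume] symmDiff S T := by
    rw [← measure_symmDiff_eq_zero_iff] at hST; apply measure_symmDiff_eq_zero_iff.mp
    have hid : symmDiff (symmDiff S Sstar) (symmDiff S T) = symmDiff Sstar T := by
      rw [symmDiff_comm S Sstar, symmDiff_assoc, symmDiff_symmDiff_cancel_left]
    exact (congrArg (fun s => volume s) hid).trans hST
  have hΔ : (∫ x in symmDiff S Sstar, |γ - f x|) = ∫ x in symmDiff S T, |γ - f x| :=
    setIntegral_congr_set hΔae
  have hΔT : MeasurableSet (symmDiff S T) := hS.symmDiff hT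
  have hΔsub : symmDiff S T ⊆ cube := by
    intro x hx
    rcases hx with hx | hx
    · exact hSsub hx.1
    · exact hTsub hx.1
  have hΔind : (∫ x in symmDiff S T, |γ - f x|) =
      ∫ x in cube, (symmDiff S T).indicator (fun y => |γ - f y|) x := by
    rw [setIntegral_indicator hΔT, Set.inter_eq_right.mpr hΔsub]
  -- integrability
  have hμcube : volume cube ≠ ⊤ := (isCompact_Icc.measure_lt_top).ne
  have hGF : IntegrableOn (fun x => γ - f x) cube volume :=
    (integrableOn_const isCompact_Icc.measure_lt_top.ne).sub hf
  have integ : ∀ U : Set (Fin d → ℝ), MeasurableSet U →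
      IntegrableOn (fun x => (γ - f x) *
        (Set.indicator U (fun _ => (1 : ℝ)) x - Set.indicator Uᶜ (fun _ => (1 : ℝ)) x)) cube volume := by
    intro U hU
    refine Integrable.mono' hGF.abs ?_ ?_
    · exact hGF.aestronglyMeasurable.mul
        (((measurable_const.indicator hU).sub (measurable_const.indicator hU.compl)).aestronglyMeasurable)
    · filter_upwards with x
      have h1 : |Set.indicator U (fun _ => (1 : ℝ)) x - Set.indicator Uᶜ (fun _ => (1 : ℝ)) x| = 1 := by
        by_cases h : x ∈ U <;>
          simp [Set.indicator_apply, h]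
      rw [Real.norm_eq_abs, abs_mul, h1, mul_one]
  -- main pointwise identity
  have hmain : (∫ x in cube, (γ - f x) *
        (Set.indicator S (fun _ => (1 : ℝ)) x - Set.indicator Sᶜ (fun _ => (1 : ℝ)) x) -
        (γ - f x) * (Set.indicator T (fun _ => (1 : ℝ)) x - Set.indicator Tᶜ (fun _ => (1 : ℝ)) x)) =
      ∫ x in cube, 2 * (symmDiff S T).indicator (fun y => |γ - f y|) x := by
    refine integral_congr_ae ?_
    filter_upwards [hae] with x hx
    obtain ⟨hxc, hxfg⟩ := hx
    by_cases hxS : x ∈ S <;> by_cases hxT : x ∈ T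
    · have hΔ : x ∉ symmDiff S T := by
        intro h; rcases h with h | h
        · exact h.2 hxT
        · exact h.2 hxS
      simp [Set.indicator_apply, hxS, hxT, hΔ]
    · have hΔ : x ∈ symmDiff S T := Or.inl ⟨hxS, hxT⟩
      have hle : f x ≤ γ := by
        have : ¬ γ < g x := fun h => hxT ⟨hxc, h⟩
        rw [hxfg]; linarith [not_lt.mp this]
      have habs : |γ - f x| = γ - f x := abs_of_nonneg (by linarith)
      rw [Set.indicator_of_mem hxS, Set.indicator_of_notMem (show x ∉ Sᶜ by simpa using hxS),
        Set.indicator_of_notMem hxT, Set.indicator_of_mem (show x ∈ Tᶜ from hxT),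
        Set.indicator_of_mem hΔ, habs]
      ring
    · have hΔ : x ∈ symmDiff S T := Or.inr ⟨hxT, hxS⟩
      have hlt : γ < f x := by
        rw [hxfg]; exact hxT.2
      have habs : |γ - f x| = -(γ - f x) := abs_of_neg (by linarith)
      rw [Set.indicator_of_notMem hxS, Set.indicator_of_mem (show x ∈ Sᶜ from hxS),
        Set.indicator_of_mem hxT, Set.indicator_of_notMem (show x ∉ Tᶜ by simpa using hxT),
        Set.indicator_of_mem hΔ, habs]
      ring
    · have hΔ : x ∉ symmDiff S T := by
        intro h; rcases h with h | h
        · exact hxS h.1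
        · exact hxT h.1
      simp [Set.indicator_apply, hxS, hxT, hΔ]
  calc R S - R Sstar
      = ∫ x in cube, ((γ - f x) *
          (Set.indicator S (fun _ => (1 : ℝ)) x - Set.indicator Sᶜ (fun _ => (1 : ℝ)) x) -
          (γ - f x) * (Set.indicator T (fun _ => (1 : ℝ)) x - Set.indicator Tᶜ (fun _ => (1 : ℝ)) x)) := by
        rw [hRstar]
        exact (integral_sub (integ S hS) (integ T hT)).symm
    _ = ∫ x in cube, 2 * (symmDiff S T).indicator (fun y => |γ - f y|) x := hmain
    _ = 2 * ∫ x in cube, (symmDiff S T).indicator (fun y => |γ - f y|) x := integral_const_mul 2 _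
    _ = 2 * ∫ x in symmDiff S Sstar, |γ - f x| := by rw [hΔ, hΔind]
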